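/- Let A be a commutative ring and M a finite length A-module. Then M decomposes as a direct sum of its localizations at the finitely many maximal ideals in its support: M ≅ ⊕_{𝔪 ∈ Supp(M)} M_𝔪. -/

import Mathlib

open Module Submodule

section Aux

variable {A : Type} [CommRing A] {M : Type} [AddCommGroup M] [Module A M]

/-- The quotient by the annihilator of a f.g. module embeds into a finite power of the module. -/
lemma aux_artinian_quot_ann (hN : IsNoetherian A M) (hA : IsArtinian A M) :
    IsArtinianRing (A ⧸ Module.annihilator A M) ∧
      IsNoetherianRing (A ⧸ Module.annihilator A M) := by
  haveI := hN; haveI := hA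
  haveI : Module.Finite A M := Module.finite_def.mpr (IsNoetherian.noetherian ⊤)
  obtain ⟨n, v, hv⟩ := Module.Finite.exists_fin (R := A) (M := M)
  let φ : A →ₗ[A] (Fin n → M) := LinearMap.pi fun i => LinearMap.toSpanSingleton A M (v i)
  have hker : LinearMap.ker φ = Module.annihilator A M := by
    ext a
    simp only [LinearMap.mem_ker, Module.mem_annihilator]
    constructor
    · intro ha m
      have hm : m ∈ Submodule.span A (Set.range v) := hv ▸ Submodule.mem_top
      induction hm using Submodule.span_induction with
      | mem x hx =>
        obtain ⟨i, rfl⟩ := hx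
        exact congrFun ha i
      | zero => simp
      | add x y _ _ hx hy => rw [smul_add, hx, hy, add_zero]
      | smul c x _ hx => rw [smul_comm, hx, smul_zero]
    · intro ha
      funext i
      exact ha (v i)
  have e : (A ⧸ Module.annihilator A M) ≃ₗ[A] LinearMap.range φ := by
    rw [← hker]; exact φ.quotKerEquivRange
  have h1 : IsArtinian A (A ⧸ Module.annihilator A M) :=
    e.isArtinian_iff.mpr inferInstance
  have h2 : IsNoetherian A (A ⧸ Module.annihilator A M) :=
    e.isNoetherian_iff.mpr inferInstance
  exact ⟨isArtinian_of_tower A h1, isNoetherian_of_tower A h2⟩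

end Aux


section Aux2

variable {A : Type} [CommRing A] {M : Type} [AddCommGroup M] [Module A M]

lemma aux_support_maximal [IsArtinianRing (A ⧸ Module.annihilator A M)] :
    ∀ p ∈ Module.support A M, p.asIdeal.IsMaximal := by
  intro p hp
  have hIp : Module.annihilator A M ≤ p.asIdeal := Module.annihilator_le_of_mem_support hp
  set mk := Ideal.Quotient.mk (Module.annihilator A M)
  have hsurj : Function.Surjective mk := Ideal.Quotient.mk_surjective
  haveI : (p.asIdeal.map mk).IsPrime :=
    Ideal.map_isPrime_of_surjective hsurj (by rwa [Ideal.mk_ker])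
  haveI : (p.asIdeal.map mk).IsMaximal := IsArtinianRing.isMaximal_of_isPrime _
  have : Ideal.comap mk (p.asIdeal.map mk) = p.asIdeal := by
    rw [Ideal.comap_map_of_surjective mk hsurj]
    rw [← RingHom.ker_eq_comap_bot, Ideal.mk_ker]
    exact sup_eq_left.mpr hIp
  rw [← this]
  exact Ideal.comap_isMaximal_of_surjective mk hsurj

lemma aux_support_finite [IsArtinianRing (A ⧸ Module.annihilator A M)]
    [Module.Finite A M] :
    (Module.support A M).Finite := by
  haveI : Finite (PrimeSpectrum (A ⧸ Module.annihilator A M)) := by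
    haveI := Set.Finite.to_subtype
      (IsArtinianRing.setOfPred_isPrime_finite (A ⧸ Module.annihilator A M))
    exact Finite.of_injective
      (fun p : PrimeSpectrum (A ⧸ Module.annihilator A M) =>
        (⟨p.asIdeal, p.2⟩ : {I : Ideal (A ⧸ Module.annihilator A M) | I.IsPrime}))
      (fun a b e => PrimeSpectrum.ext (congrArg Subtype.val e))
  have hr := range_comap_of_surjective _
    (Ideal.Quotient.mk (Module.annihilator A M)) Ideal.Quotient.mk_surjective
  rw [Ideal.mk_ker] at hr
  rw [Module.support_eq_zeroLocus, ← hr]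
  exact Set.finite_range _

end Aux2


section Aux3

variable {A : Type} [CommRing A] {M : Type} [AddCommGroup M] [Module A M]

lemma aux_inf_eq_prod {ι : Type} (f : ι → Ideal A) (S : Finset ι)
    (h : (S : Set ι).Pairwise (Function.onFun IsCoprime f)) :
    S.inf f = ∏ i ∈ S, f i := by
  classical
  induction S using Finset.induction_on with
  | empty => simp
  | insert _ _ ha ih =>
    rename_i a S
    rw [Finset.inf_insert, Finset.prod_insert ha,
      ih (h.mono (Finset.coe_subset.mpr (Finset.subset_insert a S)))]
    rw [← Ideal.inf_eq_mul_of_isCoprime]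
    exact IsCoprime.prod_right fun i hi =>
      h (by simp) (by simp [hi]) (by rintro rfl; exact ha hi)

lemma aux_pow_le [Module.Finite A M] [IsArtinianRing (A ⧸ Module.annihilator A M)]
    (s : Finset (PrimeSpectrum A)) (hs : ↑s = Module.support A M) :
    ∃ n, (∏ p ∈ s, p.asIdeal) ^ n ≤ Module.annihilator A M := by
  set I := Module.annihilator A M with hI
  set mk := Ideal.Quotient.mk I with hmk
  have hsurj : Function.Surjective mk := Ideal.Quotient.mk_surjective
  obtain ⟨n, hn⟩ := IsArtinianRing.isNilpotent_jacobson_bot (R := A ⧸ I)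
  refine ⟨n, ?_⟩
  have h1 : Ideal.map mk (∏ p ∈ s, p.asIdeal) ≤ Ideal.jacobson ⊥ := by
    rw [Ideal.jacobson]
    refine le_sInf ?_
    rintro J ⟨-, hJ⟩
    rw [Ideal.map_le_iff_le_comap]
    haveI := hJ
    have hJ' : (Ideal.comap mk J).IsMaximal := Ideal.comap_isMaximal_of_surjective mk hsurj
    have hIJ : I ≤ Ideal.comap mk J := by
      intro x hx
      rw [Ideal.mem_comap]
      have hx0 : mk x = 0 := Ideal.Quotient.eq_zero_iff_mem.mpr hx
      rw [hx0]; exact J.zero_mem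
    have hJmem : (⟨Ideal.comap mk J, hJ'.isPrime⟩ : PrimeSpectrum A) ∈ s := by
      rw [← Finset.mem_coe, hs, Module.support_eq_zeroLocus]
      exact hIJ
    exact le_trans Ideal.prod_le_inf (Finset.inf_le hJmem)
  have h2 : Ideal.map mk ((∏ p ∈ s, p.asIdeal) ^ n) = ⊥ := by
    rw [Ideal.map_pow]
    exact le_bot_iff.mp (le_trans (Ideal.pow_right_mono h1 n) (le_of_eq hn))
  have := Ideal.map_le_iff_le_comap.mp (le_of_eq h2)
  rwa [← RingHom.ker_eq_comap_bot, Ideal.mk_ker] at this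

end Aux3


section Aux4

variable {A : Type} [CommRing A] {M : Type} [AddCommGroup M] [Module A M]

lemma aux_coprime_pow {q : Ideal A} (hq : q.IsMaximal) {t : A} (ht : t ∉ q) (n : ℕ) :
    ∃ c v, v ∈ q ^ n ∧ c * t + v = 1 := by
  obtain ⟨y, i, hi, hyi⟩ := hq.exists_inv ht
  have hsup : Ideal.span {t} ⊔ q = ⊤ := by
    rw [Ideal.eq_top_iff_one]
    exact Submodule.mem_sup.mpr ⟨y * t, Ideal.mem_span_singleton.mpr ⟨y, mul_comm y t⟩,
      i, hi, hyi⟩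
  have hcop : IsCoprime (Ideal.span {t}) (q ^ n) :=
    ((Ideal.isCoprime_iff_sup_eq).mpr hsup).pow_right
  have h1 : (1 : A) ∈ Ideal.span {t} ⊔ q ^ n := by
    rw [hcop.sup_eq]; trivial
  obtain ⟨u, hu, v, hv, huv⟩ := Submodule.mem_sup.mp h1
  obtain ⟨c, rfl⟩ := Ideal.mem_span_singleton.mp hu
  exact ⟨c, v, hv, by rwa [mul_comm]⟩

variable [DecidableEq (PrimeSpectrum A)]

/-- The projection onto a torsion component is a localization map. -/
lemma aux_isLocalizedModule (s : Finset (PrimeSpectrum A))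
    (hmax : ∀ p ∈ s, p.asIdeal.IsMaximal) (n : ℕ)
    (hint : DirectSum.IsInternal fun r : s =>
      torsionBySet A M ((r.1.asIdeal ^ n : Ideal A) : Set A)) (q : s) :
    IsLocalizedModule q.1.asIdeal.primeCompl
      ((DirectSum.component A s (fun r : s =>
          torsionBySet A M ((r.1.asIdeal ^ n : Ideal A) : Set A)) q) ∘ₗ
        (LinearEquiv.ofBijective (DirectSum.coeLinearMap _) hint).symm.toLinearMap) := by
  classical
  set N : s → Submodule A M := fun r => torsionBySet A M ((r.1.asIdeal ^ n : Ideal A) : Set A)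
    with hN
  set e := LinearEquiv.ofBijective (DirectSum.coeLinearMap fun r : s => N r) hint with he
  have hkill : ∀ (r : s) (x : N r) (v : A), v ∈ r.1.asIdeal ^ n → v • x = 0 := by
    intro r x v hv
    have := (Submodule.mem_torsionBySet_iff _ _).mp x.2 ⟨v, hv⟩
    ext
    simpa using this
  have hq : q.1.asIdeal.IsMaximal := hmax q q.2
  constructor
  · -- map_units
    intro t
    rw [Module.End.isUnit_iff]
    obtain ⟨c, v, hv, hcv⟩ := aux_coprime_pow hq t.2 n
    have hid : ∀ x : N q, c • ((t : A) • x) = x := by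
      intro x
      have : (c * (t : A)) • x + v • x = x := by
        rw [← add_smul, hcv, one_smul]
      rwa [hkill q x v hv, add_zero, mul_smul] at this
    constructor
    · intro x y hxy
      simp only [Module.algebraMap_end_apply] at hxy
      rw [← hid x, ← hid y, hxy]
    · intro x
      exact ⟨c • x, by rw [Module.algebraMap_end_apply, smul_comm]; exact hid x⟩
  · -- surj'
    intro y
    refine ⟨⟨(y : M), 1⟩, ?_⟩
    have h1 : e (DirectSum.lof A s (fun r : s => N r) q y) = (y : M) := by
      rw [he, DirectSum.lof_eq_of]
      exact DirectSum.coeLinearMap_of (fun r : s => N r) q y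
    have h2 : e.symm ((y : M)) = DirectSum.lof A s (fun r : s => N r) q y := by
      rw [← h1, LinearEquiv.symm_apply_apply]
    simp only [LinearMap.comp_apply, LinearEquiv.coe_toLinearMap, h2, one_smul]
    exact (DirectSum.component.lof_self (R := A) (ι := ↥s) (M := fun r : s => ↥(N r)) q y).symm
  · -- exists_of_eq
    intro x₁ x₂ hx
    have hx0 : (e.symm (x₁ - x₂)) q = 0 := by
      have : DirectSum.component A s (fun r : s => N r) q (e.symm x₁)
          = DirectSum.component A s (fun r : s => N r) q (e.symm x₂) := hx
      rw [map_sub]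
      change (e.symm x₁ - e.symm x₂) q = 0
      rw [DirectSum.sub_apply]
      rw [sub_eq_zero]
      exact this
    -- choose elements killing other components
    have key : ∀ r : s, r ≠ q → ∃ a, a ∈ r.1.asIdeal ^ n ∧ a ∉ q.1.asIdeal := by
      intro r hr
      have hrq : ¬ r.1.asIdeal ≤ q.1.asIdeal := by
        intro hle
        exact hr (Subtype.ext (PrimeSpectrum.ext ((hmax r r.2).eq_of_le hq.ne_top hle)))
      obtain ⟨a, ha, hna⟩ := SetLike.not_le_iff_exists.mp hrq
      exact ⟨a ^ n, Ideal.pow_mem_pow ha n, fun hmem => hna (hq.isPrime.mem_of_pow_mem n hmem)⟩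
    let g : s → A := fun r => if h : r = q then 1 else (key r h).choose
    have hg1 : ∀ r : s, r ≠ q → g r ∈ r.1.asIdeal ^ n := by
      intro r hr; simp only [g, dif_neg hr]; exact (key r hr).choose_spec.1
    have hg2 : ∀ r : s, g r ∉ q.1.asIdeal := by
      intro r
      by_cases hr : r = q
      · simp only [g, dif_pos hr]
        exact fun h1 => hq.ne_top (Ideal.eq_top_iff_one _ |>.mpr h1)
      · simp only [g, dif_neg hr]; exact (key r hr).choose_spec.2
    set c : A := ∏ r ∈ Finset.univ.erase q, g r with hc
    have hcq : c ∉ q.1.asIdeal := by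
      intro hmem
      obtain ⟨r, -, hr⟩ := (Ideal.IsPrime.prod_mem_iff).mp hmem
      exact hg2 r hr
    refine ⟨⟨c, hcq⟩, ?_⟩
    have : c • (x₁ - x₂) = 0 := by
      have hd : c • (e.symm (x₁ - x₂)) = 0 := by
        refine DFinsupp.ext fun r => ?_
        rw [DirectSum.smul_apply, DirectSum.zero_apply]
        by_cases hr : r = q
        · subst hr; rw [hx0, smul_zero]
        · have hrmem : r ∈ Finset.univ.erase q := Finset.mem_erase.mpr ⟨hr, Finset.mem_univ r⟩
          have : c = g r * ∏ r' ∈ (Finset.univ.erase q).erase r, g r' :=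
            (Finset.mul_prod_erase _ _ hrmem).symm
          rw [this, mul_comm, mul_smul, hkill r _ (g r) (hg1 r hr), smul_zero]
      have := congrArg e hd
      rwa [map_smul, LinearEquiv.apply_symm_apply, map_zero] at this
    rw [smul_sub, sub_eq_zero] at this
    exact this
  

end Aux4


set_option maxHeartbeats 2000000 in
/-- A finite length module over a commutative ring is the direct sum of its localizations
at the finitely many maximal ideals in its support. -/
theorem finiteLength_module_decomposes_over_support
    (A : Type) [CommRing A] (M : Type) [AddCommGroup M] [Module A M]
    (h : IsFiniteLength A M) :
    ∃ s : Finset (PrimeSpectrum A), (↑s = Module.support A M) ∧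
      (∀ p ∈ s, p.asIdeal.IsMaximal) ∧
      Nonempty (M ≃ₗ[A] DirectSum s
        (fun p => LocalizedModule p.1.asIdeal.primeCompl M)) := by
  classical
  obtain ⟨hNoeth, hArt⟩ := isFiniteLength_iff_isNoetherian_isArtinian.mp h
  haveI := hNoeth; haveI := hArt
  haveI : Module.Finite A M := Module.finite_def.mpr (IsNoetherian.noetherian ⊤)
  obtain ⟨hArtRing, hNoethRing⟩ := aux_artinian_quot_ann (A := A) (M := M) hNoeth hArt
  haveI := hArtRing; haveI := hNoethRing
  have hfin : (Module.support A M).Finite := aux_support_finite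
  set s : Finset (PrimeSpectrum A) := hfin.toFinset with hsdef
  have hs : (↑s : Set (PrimeSpectrum A)) = Module.support A M := hfin.coe_toFinset
  have hmax : ∀ p ∈ s, p.asIdeal.IsMaximal := by
    intro p hp
    have hp' : p ∈ Module.support A M := by
      rw [← hs]; exact hp
    exact aux_support_maximal p hp'
  obtain ⟨n, hn⟩ := aux_pow_le s hs
  -- pairwise coprimality of the powers
  have hp : (↑s : Set (PrimeSpectrum A)).Pairwise
      fun i j => i.asIdeal ^ n ⊔ j.asIdeal ^ n = ⊤ := by
    intro i hi j hj hij
    have hne : i.asIdeal ≠ j.asIdeal := fun hh => hij (PrimeSpectrum.ext hh)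
    have hsup : i.asIdeal ⊔ j.asIdeal = ⊤ :=
      (hmax i (Finset.mem_coe.mp hi)).coprime_of_ne (hmax j (Finset.mem_coe.mp hj)) hne
    exact (((Ideal.isCoprime_iff_sup_eq).mpr hsup).pow).sup_eq
  -- torsion
  have hM : Module.IsTorsionBySet A M ((⨅ i ∈ s, i.asIdeal ^ n : Ideal A) : Set A) := by
    have hle : (⨅ i ∈ s, i.asIdeal ^ n : Ideal A) ≤ Module.annihilator A M := by
      have h1 : (⨅ i ∈ s, i.asIdeal ^ n : Ideal A) = s.inf (fun i => i.asIdeal ^ n) := by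
        rw [Finset.inf_eq_iInf]
      have h2 : s.inf (fun i => i.asIdeal ^ n) = ∏ i ∈ s, i.asIdeal ^ n :=
        aux_inf_eq_prod _ s (fun i hi j hj hij => by
          rw [Function.onFun, Ideal.isCoprime_iff_sup_eq]
          exact hp hi hj hij)
      rw [h1, h2, Finset.prod_pow]
      exact hn
    intro x a
    exact Module.mem_annihilator.mp (hle a.2) x
  have hint : DirectSum.IsInternal fun r : s =>
      torsionBySet A M ((r.1.asIdeal ^ n : Ideal A) : Set A) :=
    Submodule.torsionBySet_isInternal (p := fun i : PrimeSpectrum A => i.asIdeal ^ n)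
      (S := s) hp hM
  set N : s → Submodule A M := fun r => torsionBySet A M ((r.1.asIdeal ^ n : Ideal A) : Set A)
    with hN
  set e := LinearEquiv.ofBijective (DirectSum.coeLinearMap fun r : s => N r) hint with he
  have eqv : ∀ q : s, (N q) ≃ₗ[A] LocalizedModule q.1.asIdeal.primeCompl M := fun q =>
    letI := aux_isLocalizedModule s hmax n hint q
    (IsLocalizedModule.iso q.1.asIdeal.primeCompl
      ((DirectSum.component A s (fun r : s => N r) q) ∘ₗ e.symm.toLinearMap)).symm
  exact ⟨s, hs, hmax, ⟨e.symm.trans (DFinsupp.mapRange.linearEquiv eqv)⟩⟩
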